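/- For every integer k ≥ 3, every vertex x of G_k, and every α ∈ {1,...,k}, in every (x,α)-CGC of G_k that uses k+1 colors, each of the four vertices u, u', v, v' receives a color in {1,...,k}. -/

import Mathlib

open SimpleGraph

/-- One step of the greedy coloring algorithm: color the vertex `w` with the smallest
positive integer not already used on one of its (already colored) neighbours.
Color `0` means "not yet colored". -/
noncomputable def greedyStep {V : Type*} [DecidableEq V] (G : SimpleGraph V)
    (f : V → ℕ) (w : V) : V → ℕ :=
  Function.update f w (sInf {n : ℕ | 0 < n ∧ ∀ z, G.Adj w z → f z ≠ n})

/-- The coloring obtained by greedily coloring the vertices of the list `l` in order,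
starting from the partial coloring `f₀`. -/
noncomputable def greedyFrom {V : Type*} [DecidableEq V] (G : SimpleGraph V)
    (f₀ : V → ℕ) (l : List V) : V → ℕ :=
  l.foldl (greedyStep G) f₀

/-- The greedy coloring of the ordering `l` (all vertices initially uncolored). -/
noncomputable def greedy {V : Type*} [DecidableEq V] (G : SimpleGraph V)
    (l : List V) : V → ℕ :=
  greedyFrom G (fun _ => 0) l

/-- `l` is a connected ordering of the vertices of `G`: it lists every vertex exactly once,
and every vertex other than the first has a neighbour occurring earlier in the list. -/
def IsConnectedOrder {V : Type*} (G : SimpleGraph V) (l : List V) : Prop :=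
  l.Nodup ∧ (∀ w : V, w ∈ l) ∧
    ∀ i : Fin l.length, 0 < (i : ℕ) →
      ∃ j : Fin l.length, (j : ℕ) < (i : ℕ) ∧ G.Adj (l.get i) (l.get j)

/-- `f` is a connected greedy coloring (CGC) of `G`. -/
def IsCGC {V : Type*} [DecidableEq V] (G : SimpleGraph V) (f : V → ℕ) : Prop :=
  ∃ l : List V, IsConnectedOrder G l ∧ f = greedy G l

/-- `f` is an `(x, α)`-connected greedy coloring of `G`: it is obtained from a connected
ordering starting at `x` by coloring `x` with `α` and then coloring each subsequent
vertex with the smallest positive integer not appearing on its already-colored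
neighbours. -/
def IsCGCFrom {V : Type*} [DecidableEq V] (G : SimpleGraph V) (x : V) (α : ℕ)
    (f : V → ℕ) : Prop :=
  ∃ l : List V, IsConnectedOrder G (x :: l) ∧
    f = greedyFrom G (Function.update (fun _ => 0) x α) l

/-- `f` uses exactly `k` colors. -/
def UsesColors {V : Type*} (f : V → ℕ) (k : ℕ) : Prop :=
  ∃ s : Finset ℕ, (∀ w, f w ∈ s) ∧ (∀ c ∈ s, ∃ w, f w = c) ∧ s.card = k

/-- The connected chromatic number of `G`: the least `k` such that some connected greedy
coloring of `G` only uses colors in `{1, …, k}`. -/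
noncomputable def connChrom {V : Type*} [DecidableEq V] (G : SimpleGraph V) : ℕ :=
  sInf {k | ∃ f, IsCGC G f ∧ ∀ w, f w ≤ k}

/-- The vertices of the gadget `G_k`: three cliques `U`, `W` (called `V` in the paper)
and `M` of size `k` each (the distinguished vertex `w` of `M` is `M i` with `i.val = 0`),
together with four special vertices `u, u', v, v'`. -/
inductive GkVert (k : ℕ) where
  | U : Fin k → GkVert k
  | W : Fin k → GkVert k
  | M : Fin k → GkVert k
  | u : GkVert k
  | u' : GkVert k
  | v : GkVert k
  | v' : GkVert k
deriving DecidableEq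

/-- The gadget `G_k`: `U`, `W` and `M` are cliques, `u` and `u'` are complete to `U`,
`v` and `v'` are complete to `W`, `u` and `v` are complete to `M ∖ {w}`, and
`u'` and `v'` are adjacent to `w` (where `w` is the vertex `M i` with `i.val = 0`). -/
def Gk (k : ℕ) : SimpleGraph (GkVert k) :=
  SimpleGraph.fromRel (fun a b =>
    (∃ i j, a = GkVert.U i ∧ b = GkVert.U j) ∨
    (∃ i j, a = GkVert.W i ∧ b = GkVert.W j) ∨
    (∃ i j, a = GkVert.M i ∧ b = GkVert.M j) ∨
    (∃ i, a = GkVert.u ∧ b = GkVert.U i) ∨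
    (∃ i, a = GkVert.u' ∧ b = GkVert.U i) ∨
    (∃ i, a = GkVert.v ∧ b = GkVert.W i) ∨
    (∃ i, a = GkVert.v' ∧ b = GkVert.W i) ∨
    (∃ i : Fin k, i.val ≠ 0 ∧ a = GkVert.u ∧ b = GkVert.M i) ∨
    (∃ i : Fin k, i.val ≠ 0 ∧ a = GkVert.v ∧ b = GkVert.M i) ∨
    (∃ i : Fin k, i.val = 0 ∧ a = GkVert.u' ∧ b = GkVert.M i) ∨
    (∃ i : Fin k, i.val = 0 ∧ a = GkVert.v' ∧ b = GkVert.M i))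



section GreedyLemmas

variable {V : Type*} [DecidableEq V] (G : SimpleGraph V)

lemma greedyFrom_eq_of_not_mem (f₀ : V → ℕ) (l : List V) (z : V) (hz : z ∉ l) :
    greedyFrom G f₀ l z = f₀ z := by
  induction l generalizing f₀ with
  | nil => rfl
  | cons a t ih =>
      have hz' : z ∉ t := fun h => hz (List.mem_cons_of_mem _ h)
      have hza : z ≠ a := fun h => hz (h ▸ List.mem_cons_self)
      show greedyFrom G (greedyStep G f₀ a) t z = f₀ z
      rw [ih _ hz', greedyStep, Function.update_of_ne hza]

lemma greedyFrom_append (f₀ : V → ℕ) (l₁ l₂ : List V) :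
    greedyFrom G f₀ (l₁ ++ l₂) = greedyFrom G (greedyFrom G f₀ l₁) l₂ := by
  simp [greedyFrom, List.foldl_append]

variable [Fintype V]

/-- partial coloring after `i` greedy steps -/
noncomputable def partCol (x : V) (α : ℕ) (l : List V) (i : ℕ) : V → ℕ :=
  greedyFrom G (Function.update (fun _ => 0) x α) (l.take i)

variable {G} {x : V} {α : ℕ} {l : List V} {k : ℕ}

set_option linter.unusedSectionVars false

lemma partCol_zero_of (i : ℕ) {z : V} (hzx : z ≠ x) (hz : z ∉ l.take i) :
    partCol G x α l i z = 0 := by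
  rw [partCol, greedyFrom_eq_of_not_mem _ _ _ _ hz, Function.update_of_ne hzx]

lemma agree (hnd : (x :: l).Nodup) (i : ℕ) {z : V} (hz : z = x ∨ z ∈ l.take i) :
    greedyFrom G (Function.update (fun _ => 0) x α) l z = partCol G x α l i z := by
  have hxl : x ∉ l := (List.nodup_cons.1 hnd).1
  conv_lhs => rw [← List.take_append_drop i l]
  rw [greedyFrom_append]
  apply greedyFrom_eq_of_not_mem
  intro hmem
  rcases hz with rfl | hz
  · exact hxl (List.mem_of_mem_drop hmem)
  · exact (List.disjoint_take_drop (List.nodup_cons.1 hnd).2 le_rfl) hz hmem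

lemma final_x (hnd : (x :: l).Nodup) :
    greedyFrom G (Function.update (fun _ => 0) x α) l x = α := by
  rw [greedyFrom_eq_of_not_mem _ _ _ _ (List.nodup_cons.1 hnd).1, Function.update_self]

lemma step_val (hnd : (x :: l).Nodup) {i : ℕ} (h : i < l.length) :
    greedyFrom G (Function.update (fun _ => 0) x α) l (l.get ⟨i, h⟩) =
      sInf {n : ℕ | 0 < n ∧ ∀ z, G.Adj (l.get ⟨i, h⟩) z → partCol G x α l i z ≠ n} := by
  set y := l.get ⟨i, h⟩ with hy
  have hmem : y ∈ l.take (i + 1) := by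
    rw [List.take_succ]
    refine List.mem_append.2 (Or.inr ?_)
    simp [List.getElem?_eq_getElem h, hy, List.get_eq_getElem]
  have h1 : l.take (i+1) = l.take i ++ [y] := by
    rw [List.take_succ]
    simp [List.getElem?_eq_getElem h, hy, List.get_eq_getElem]
  rw [agree hnd (i+1) (Or.inr hmem)]
  rw [partCol, h1, greedyFrom_append]
  show greedyStep G (partCol G x α l i) y y = _
  rw [greedyStep, Function.update_self]

lemma set_nonempty (y : V) (i : ℕ) :
    {n : ℕ | 0 < n ∧ ∀ z, G.Adj y z → partCol G x α l i z ≠ n}.Nonempty := by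
  refine ⟨Finset.univ.sup (partCol G x α l i) + 1, Nat.succ_pos _, fun z _ hEq => ?_⟩
  have := Finset.le_sup (f := partCol G x α l i) (Finset.mem_univ z)
  omega

lemma step_pos_avoid (hnd : (x :: l).Nodup) {i : ℕ} (h : i < l.length) :
    0 < greedyFrom G (Function.update (fun _ => 0) x α) l (l.get ⟨i, h⟩) ∧
    ∀ z, G.Adj (l.get ⟨i, h⟩) z →
      partCol G x α l i z ≠ greedyFrom G (Function.update (fun _ => 0) x α) l (l.get ⟨i, h⟩) := by
  rw [step_val hnd h]
  exact Nat.sInf_mem (set_nonempty _ _)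

lemma step_cover (hnd : (x :: l).Nodup) {i : ℕ} (h : i < l.length) {d : ℕ} (hd : 0 < d)
    (hlt : d < greedyFrom G (Function.update (fun _ => 0) x α) l (l.get ⟨i, h⟩)) :
    ∃ z, G.Adj (l.get ⟨i, h⟩) z ∧ (z = x ∨ z ∈ l.take i) ∧
      greedyFrom G (Function.update (fun _ => 0) x α) l z = d := by
  rw [step_val hnd h] at hlt
  have hnot := Nat.notMem_of_lt_sInf hlt
  simp only [Set.mem_setOf_eq, not_and, not_forall] at hnot
  obtain ⟨z, hadj, hz⟩ := hnot hd
  have hz' : partCol G x α l i z = d := by tauto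
  have hzx : z = x ∨ z ∈ l.take i := by
    by_contra hc
    push_neg at hc
    rw [partCol_zero_of i hc.1 hc.2] at hz'
    omega
  exact ⟨z, hadj, hzx, by rw [agree hnd i hzx, hz']⟩

lemma get_mem_take {l : List V} {i j : ℕ} (hj : j < i) (h : j < l.length) :
    l.get ⟨j, h⟩ ∈ l.take i := by
  have hlen : j < (l.take i).length := by simp [List.length_take]; omega
  have heq : (l.take i).get ⟨j, hlen⟩ = l.get ⟨j, h⟩ := by
    simp [List.get_eq_getElem, List.getElem_take]
  rw [← heq]; exact List.get_mem _ ⟨j, hlen⟩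

lemma indexOf_lt_of_mem_take {l : List V} {i : ℕ} {z : V} (h : z ∈ l.take i) :
    l.idxOf z < i := by
  have h1 : l.idxOf z = (l.take i).idxOf z := by
    conv_lhs => rw [← List.take_append_drop i l]
    rw [List.idxOf_append_of_mem h]
  rw [h1]
  have h2 : (l.take i).idxOf z < (l.take i).length := List.idxOf_lt_length_iff.2 h
  have h3 : (l.take i).length ≤ i := by simp [List.length_take]
  omega

lemma proper_aux (hnd : (x :: l).Nodup) {i : ℕ} (h : i < l.length) {z : V}
    (hadj : G.Adj (l.get ⟨i, h⟩) z) (hz : z = x ∨ z ∈ l.take i) :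
    greedyFrom G (Function.update (fun _ => 0) x α) l (l.get ⟨i, h⟩) ≠
      greedyFrom G (Function.update (fun _ => 0) x α) l z := by
  have h2 := (step_pos_avoid (α := α) hnd h).2 z hadj
  rw [agree hnd i hz]
  exact fun hEq => h2 (hEq ▸ rfl)

lemma greedy_proper (hnd : (x :: l).Nodup) {y z : V} (hy : y ∈ x :: l) (hz : z ∈ x :: l)
    (hadj : G.Adj y z) :
    greedyFrom G (Function.update (fun _ => 0) x α) l y ≠
      greedyFrom G (Function.update (fun _ => 0) x α) l z := by
  rcases List.mem_cons.1 hy with rfl | hy'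
  · rcases List.mem_cons.1 hz with rfl | hz'
    · exact absurd hadj (G.irrefl)
    · obtain ⟨j, hj⟩ := List.mem_iff_get.1 hz'
      exact (hj ▸ (proper_aux hnd j.isLt (hj ▸ hadj.symm) (Or.inl rfl))).symm
  · obtain ⟨i, hi⟩ := List.mem_iff_get.1 hy'
    rcases List.mem_cons.1 hz with rfl | hz'
    · exact hi ▸ proper_aux hnd i.isLt (hi ▸ hadj) (Or.inl rfl)
    · obtain ⟨j, hj⟩ := List.mem_iff_get.1 hz'
      have hij : (i : ℕ) ≠ (j : ℕ) := by
        intro hEq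
        apply hadj.ne
        rw [← hi, ← hj]
        congr 1
        exact Fin.ext hEq
      rcases lt_or_gt_of_ne hij with hlt | hlt
      · exact (hj ▸ (proper_aux hnd j.isLt (hj ▸ hadj.symm)
          (Or.inr (hi ▸ get_mem_take hlt i.isLt)))).symm
      · exact hi ▸ proper_aux hnd i.isLt (hi ▸ hadj)
          (Or.inr (hj ▸ get_mem_take hlt j.isLt))

lemma greedy_pos (hnd : (x :: l).Nodup) (hα : 0 < α) {y : V} (hy : y ∈ x :: l) :
    0 < greedyFrom G (Function.update (fun _ => 0) x α) l y := by
  rcases List.mem_cons.1 hy with rfl | hy'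
  · rw [final_x hnd]; exact hα
  · obtain ⟨i, hi⟩ := List.mem_iff_get.1 hy'
    exact hi ▸ (step_pos_avoid hnd i.isLt).1

lemma colors_in_Icc (hnd : (x :: l).Nodup) (hall : ∀ w : V, w ∈ x :: l)
    (hα : 1 ≤ α) (hαk : α ≤ k)
    (huse : UsesColors (greedyFrom G (Function.update (fun _ => 0) x α) l) (k + 1)) :
    ∀ w : V, greedyFrom G (Function.update (fun _ => 0) x α) l w ∈ Finset.Icc 1 (k + 1) := by
  set f := greedyFrom G (Function.update (fun _ => 0) x α) l with hf
  obtain ⟨s, hs1, hs2, hs3⟩ := huse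
  have hpos : ∀ c ∈ s, 1 ≤ c := by
    intro c hc
    obtain ⟨w, hw⟩ := hs2 c hc
    exact hw ▸ greedy_pos hnd hα (hall w)
  have hsub : ∀ y ∈ l, Finset.Icc 1 (f y) ⊆ s := by
    intro y hy d hd
    obtain ⟨i, hi⟩ := List.mem_iff_get.1 hy
    rw [Finset.mem_Icc] at hd
    rcases eq_or_lt_of_le hd.2 with rfl | hlt
    · exact hs1 y
    · obtain ⟨z, _, _, hz⟩ := step_cover hnd i.isLt hd.1 (hi ▸ hlt)
      exact hz ▸ hs1 z
  have hne : s.Nonempty := Finset.card_pos.1 (by omega)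
  set M := s.max' hne with hM
  by_cases hcase : ∃ y ∈ l, f y = M
  · obtain ⟨y, hy, hyM⟩ := hcase
    have h1 : Finset.Icc 1 M ⊆ s := hyM ▸ hsub y hy
    have h2 : s ⊆ Finset.Icc 1 M := fun c hc =>
      Finset.mem_Icc.2 ⟨hpos c hc, s.le_max' c hc⟩
    have hEq : s = Finset.Icc 1 M := Finset.Subset.antisymm h2 h1
    have hMk : M = k + 1 := by
      have := hEq ▸ hs3
      rw [Nat.card_Icc] at this
      omega
    intro w
    exact hMk ▸ hEq ▸ hs1 w
  · push_neg at hcase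
    exfalso
    obtain ⟨w, hw⟩ := hs2 M (s.max'_mem hne)
    have hwx : w = x := by
      rcases List.mem_cons.1 (hall w) with h | h
      · exact h
      · exact absurd hw (hcase w h)
    have hMα : M = α := by rw [← hw, hwx, hf, final_x hnd]
    have hsubk : s ⊆ Finset.Icc 1 k := fun c hc =>
      Finset.mem_Icc.2 ⟨hpos c hc, le_trans (hMα ▸ s.le_max' c hc) hαk⟩
    have := Finset.card_le_card hsubk
    rw [Nat.card_Icc] at this
    omega

lemma greedy_cover_contra (hnd : (x :: l).Nodup) {i : ℕ} (hi : i < l.length)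
    (hfy : greedyFrom G (Function.update (fun _ => 0) x α) l (l.get ⟨i, hi⟩) = k + 1)
    (T : Finset V) (hTk : T.card < k)
    (hstep : ∀ z, G.Adj (l.get ⟨i, hi⟩) z → (z = x ∨ z ∈ l.take i) → z ∈ T) : False := by
  have hsub : Finset.Icc 1 k ⊆
      T.image (greedyFrom G (Function.update (fun _ => 0) x α) l) := by
    intro d hd
    rw [Finset.mem_Icc] at hd
    obtain ⟨z, hadj, hzt, hzd⟩ := step_cover hnd hi hd.1 (by rw [hfy]; omega)
    exact Finset.mem_image.2 ⟨z, hstep z hadj hzt, hzd⟩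
  have h1 := Finset.card_le_card hsub
  have h2 := Finset.card_image_le
    (s := T) (f := greedyFrom G (Function.update (fun _ => 0) x α) l)
  rw [Nat.card_Icc] at h1
  omega

end GreedyLemmas

deriving instance Fintype for GkVert

section GkLemmas

variable {k : ℕ}

lemma adj_u {z : GkVert k} : (Gk k).Adj GkVert.u z ↔
    (∃ i, z = GkVert.U i) ∨ (∃ i : Fin k, i.val ≠ 0 ∧ z = GkVert.M i) := by
  cases z <;> simp [Gk, SimpleGraph.fromRel_adj]

lemma adj_u' {z : GkVert k} : (Gk k).Adj GkVert.u' z ↔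
    (∃ i, z = GkVert.U i) ∨ (∃ i : Fin k, i.val = 0 ∧ z = GkVert.M i) := by
  cases z <;> simp [Gk, SimpleGraph.fromRel_adj]

lemma adj_v {z : GkVert k} : (Gk k).Adj GkVert.v z ↔
    (∃ i, z = GkVert.W i) ∨ (∃ i : Fin k, i.val ≠ 0 ∧ z = GkVert.M i) := by
  cases z <;> simp [Gk, SimpleGraph.fromRel_adj]

lemma adj_v' {z : GkVert k} : (Gk k).Adj GkVert.v' z ↔
    (∃ i, z = GkVert.W i) ∨ (∃ i : Fin k, i.val = 0 ∧ z = GkVert.M i) := by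
  cases z <;> simp [Gk, SimpleGraph.fromRel_adj]

lemma adj_W {j : Fin k} {z : GkVert k} : (Gk k).Adj (GkVert.W j) z ↔
    (∃ i, i ≠ j ∧ z = GkVert.W i) ∨ z = GkVert.v ∨ z = GkVert.v' := by
  cases z <;> simp [Gk, SimpleGraph.fromRel_adj] <;> aesop

lemma adj_U {j : Fin k} {z : GkVert k} : (Gk k).Adj (GkVert.U j) z ↔
    (∃ i, i ≠ j ∧ z = GkVert.U i) ∨ z = GkVert.u ∨ z = GkVert.u' := by
  cases z <;> simp [Gk, SimpleGraph.fromRel_adj] <;> aesop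

lemma adj_M {i j : Fin k} (h : i ≠ j) : (Gk k).Adj (GkVert.M i) (GkVert.M j) := by
  simp [Gk, SimpleGraph.fromRel_adj, h]

lemma adj_UU {p q : Fin k} (h : p ≠ q) : (Gk k).Adj (GkVert.U p) (GkVert.U q) :=
  adj_U.2 (Or.inl ⟨q, Ne.symm h, rfl⟩)

lemma adj_WW {p q : Fin k} (h : p ≠ q) : (Gk k).Adj (GkVert.W p) (GkVert.W q) :=
  adj_W.2 (Or.inl ⟨q, Ne.symm h, rfl⟩)

lemma adj_uU (p : Fin k) : (Gk k).Adj GkVert.u (GkVert.U p) :=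
  adj_u.2 (Or.inl ⟨p, rfl⟩)

lemma adj_u'U (p : Fin k) : (Gk k).Adj GkVert.u' (GkVert.U p) :=
  adj_u'.2 (Or.inl ⟨p, rfl⟩)

lemma adj_vW (p : Fin k) : (Gk k).Adj GkVert.v (GkVert.W p) :=
  adj_v.2 (Or.inl ⟨p, rfl⟩)

lemma adj_v'W (p : Fin k) : (Gk k).Adj GkVert.v' (GkVert.W p) :=
  adj_v'.2 (Or.inl ⟨p, rfl⟩)

lemma adj_uM {p : Fin k} (hp : p.val ≠ 0) : (Gk k).Adj GkVert.u (GkVert.M p) :=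
  adj_u.2 (Or.inr ⟨p, hp, rfl⟩)

lemma adj_u'M {p : Fin k} (hp : p.val = 0) : (Gk k).Adj GkVert.u' (GkVert.M p) :=
  adj_u'.2 (Or.inr ⟨p, hp, rfl⟩)

lemma adj_vM {p : Fin k} (hp : p.val ≠ 0) : (Gk k).Adj GkVert.v (GkVert.M p) :=
  adj_v.2 (Or.inr ⟨p, hp, rfl⟩)

lemma adj_v'M {p : Fin k} (hp : p.val = 0) : (Gk k).Adj GkVert.v' (GkVert.M p) :=
  adj_v'.2 (Or.inr ⟨p, hp, rfl⟩)

end GkLemmas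

theorem statement4 (k : ℕ) (hk : 3 ≤ k) (x : GkVert k) (α : ℕ)
    (hα : α ∈ Finset.Icc 1 k) (f : GkVert k → ℕ)
    (hf : IsCGCFrom (Gk k) x α f) (huse : UsesColors f (k + 1)) :
    f GkVert.u ∈ Finset.Icc 1 k ∧ f GkVert.u' ∈ Finset.Icc 1 k ∧
      f GkVert.v ∈ Finset.Icc 1 k ∧ f GkVert.v' ∈ Finset.Icc 1 k := by
  obtain ⟨l, ⟨hnd, hall, hconn⟩, hfeq⟩ := hf
  rw [Finset.mem_Icc] at hα
  obtain ⟨hα1, hα2⟩ := hα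
  have h0k : (0 : ℕ) < k := by omega
  subst hfeq
  set f := greedyFrom (Gk k) (Function.update (fun _ => 0) x α) l with hfdef
  have hprop : ∀ y z : GkVert k, (Gk k).Adj y z → f y ≠ f z := fun y z hadj =>
    greedy_proper hnd (hall y) (hall z) hadj
  have hrange : ∀ w, f w ∈ Finset.Icc 1 (k + 1) :=
    colors_in_Icc hnd hall hα1 hα2 huse
  have hIccCard : (Finset.Icc 1 (k + 1)).card = k + 1 := by rw [Nat.card_Icc]; omega
  have key : ∀ c : ℕ, c ∈ Finset.Icc 1 (k + 1) → ∀ S : Finset ℕ, S.card = k →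
      S ⊆ Finset.Icc 1 (k + 1) → c ∉ S → insert c S = Finset.Icc 1 (k + 1) := by
    intro c hc S hcard hsub hnot
    apply Finset.eq_of_subset_of_card_le (Finset.insert_subset hc hsub)
    rw [Finset.card_insert_of_notMem hnot, hcard, hIccCard]
  -- the clique color sets
  set FU := Finset.univ.image (fun p : Fin k => f (GkVert.U p)) with hFUdef
  set FW := Finset.univ.image (fun p : Fin k => f (GkVert.W p)) with hFWdef
  set FM := Finset.univ.image (fun p : Fin k => f (GkVert.M p)) with hFMdef
  have hUcard : FU.card = k := by
    rw [hFUdef, Finset.card_image_of_injective _ ?_, Finset.card_univ, Fintype.card_fin]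
    intro p q h
    by_contra hne
    exact hprop _ _ (adj_UU hne) h
  have hWcard : FW.card = k := by
    rw [hFWdef, Finset.card_image_of_injective _ ?_, Finset.card_univ, Fintype.card_fin]
    intro p q h
    by_contra hne
    exact hprop _ _ (adj_WW hne) h
  have hMcard : FM.card = k := by
    rw [hFMdef, Finset.card_image_of_injective _ ?_, Finset.card_univ, Fintype.card_fin]
    intro p q h
    by_contra hne
    exact hprop _ _ (adj_M hne) h
  have hFUsub : FU ⊆ Finset.Icc 1 (k + 1) := by
    intro c hc
    obtain ⟨p, _, rfl⟩ := Finset.mem_image.1 hc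
    exact hrange _
  have hFWsub : FW ⊆ Finset.Icc 1 (k + 1) := by
    intro c hc
    obtain ⟨p, _, rfl⟩ := Finset.mem_image.1 hc
    exact hrange _
  have hFMsub : FM ⊆ Finset.Icc 1 (k + 1) := by
    intro c hc
    obtain ⟨p, _, rfl⟩ := Finset.mem_image.1 hc
    exact hrange _
  have hfuFU : f GkVert.u ∉ FU := by
    intro hmem
    obtain ⟨p, _, hp⟩ := Finset.mem_image.1 hmem
    exact hprop _ _ (adj_uU p) hp.symm
  have hfu'FU : f GkVert.u' ∉ FU := by
    intro hmem
    obtain ⟨p, _, hp⟩ := Finset.mem_image.1 hmem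
    exact hprop _ _ (adj_u'U p) hp.symm
  have hfvFW : f GkVert.v ∉ FW := by
    intro hmem
    obtain ⟨p, _, hp⟩ := Finset.mem_image.1 hmem
    exact hprop _ _ (adj_vW p) hp.symm
  have hfv'FW : f GkVert.v' ∉ FW := by
    intro hmem
    obtain ⟨p, _, hp⟩ := Finset.mem_image.1 hmem
    exact hprop _ _ (adj_v'W p) hp.symm
  have hu1 := key _ (hrange GkVert.u) FU hUcard hFUsub hfuFU
  have hu2 := key _ (hrange GkVert.u') FU hUcard hFUsub hfu'FU
  have hv1 := key _ (hrange GkVert.v) FW hWcard hFWsub hfvFW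
  have hv2 := key _ (hrange GkVert.v') FW hWcard hFWsub hfv'FW
  have huu' : f GkVert.u' = f GkVert.u := by
    have hmem : f GkVert.u' ∈ insert (f GkVert.u) FU := by
      rw [hu1, ← hu2]
      exact Finset.mem_insert_self _ _
    rcases Finset.mem_insert.1 hmem with h | h
    · exact h
    · exact absurd h hfu'FU
  have hvv' : f GkVert.v' = f GkVert.v := by
    have hmem : f GkVert.v' ∈ insert (f GkVert.v) FW := by
      rw [hv1, ← hv2]
      exact Finset.mem_insert_self _ _
    rcases Finset.mem_insert.1 hmem with h | h
    · exact h
    · exact absurd h hfv'FW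
  have hfuFM : f GkVert.u ∉ FM := by
    intro hmem
    obtain ⟨p, _, hp⟩ := Finset.mem_image.1 hmem
    by_cases hp0 : p.val = 0
    · exact hprop _ _ (adj_u'M hp0) (huu' ▸ hp.symm)
    · exact hprop _ _ (adj_uM hp0) hp.symm
  have hfvFM : f GkVert.v ∉ FM := by
    intro hmem
    obtain ⟨p, _, hp⟩ := Finset.mem_image.1 hmem
    by_cases hp0 : p.val = 0
    · exact hprop _ _ (adj_v'M hp0) (hvv' ▸ hp.symm)
    · exact hprop _ _ (adj_vM hp0) hp.symm
  have hm1 := key _ (hrange GkVert.u) FM hMcard hFMsub hfuFM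
  have hvu : f GkVert.v = f GkVert.u := by
    have hmem : f GkVert.v ∈ insert (f GkVert.u) FM := by
      rw [hm1]
      exact hrange _
    rcases Finset.mem_insert.1 hmem with h | h
    · exact h
    · exact absurd h hfvFM
  -- it remains to show that the common color is at most k
  have h1u : 1 ≤ f GkVert.u := (Finset.mem_Icc.1 (hrange GkVert.u)).1
  have huk1 : f GkVert.u ≤ k + 1 := (Finset.mem_Icc.1 (hrange GkVert.u)).2
  have hne : f GkVert.u ≠ k + 1 := by
    intro hcu
    -- the common color is k+1; derive a contradiction
    have uside : x ≠ GkVert.u → x ≠ GkVert.u' → (∀ p : Fin k, x ≠ GkVert.U p) → False := by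
      intro hx1 hx2 hx3
      set B : Finset (GkVert k) :=
        insert GkVert.u (insert GkVert.u' (Finset.univ.image GkVert.U)) with hB
      have hxB : x ∉ B := by
        simp only [hB, Finset.mem_insert, Finset.mem_image, Finset.mem_univ, true_and]
        push_neg
        exact ⟨hx1, hx2, fun p h => hx3 p h.symm⟩
      obtain ⟨y, hyB, hymin⟩ := B.exists_min_image (fun z => l.idxOf z)
        ⟨GkVert.u, by simp [hB]⟩
      have hyx : y ≠ x := fun h => hxB (h ▸ hyB)
      have hyl : y ∈ l := by
        rcases List.mem_cons.1 (hall y) with h | h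
        · exact absurd h hyx
        · exact h
      set i := l.idxOf y with hidef
      have hi : i < l.length := List.idxOf_lt_length_iff.2 hyl
      have hyget : l.get ⟨i, hi⟩ = y := List.getElem_idxOf hi
      have hBearly : ∀ z ∈ B, ¬(z = x ∨ z ∈ l.take i) := by
        rintro z hz (rfl | hzt)
        · exact hxB hz
        · have hlt := indexOf_lt_of_mem_take hzt
          have hle := hymin z hz
          omega
      have hyB' := hyB
      simp only [hB, Finset.mem_insert, Finset.mem_image, Finset.mem_univ, true_and] at hyB'
      rcases hyB' with rfl | rfl | ⟨j, hj⟩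
      · -- y = u
        refine greedy_cover_contra hnd hi (by rw [hyget]; exact hcu)
          (Finset.image GkVert.M (Finset.univ.filter fun p : Fin k => p.val ≠ 0)) ?_ ?_
        · have hsub : (Finset.univ.filter fun p : Fin k => p.val ≠ 0) ⊆
              Finset.univ.erase (⟨0, h0k⟩ : Fin k) := by
            intro p hp
            rw [Finset.mem_filter] at hp
            refine Finset.mem_erase.2 ⟨fun h => hp.2 (by rw [h]), Finset.mem_univ _⟩
          calc (Finset.image GkVert.M (Finset.univ.filter fun p : Fin k => p.val ≠ 0)).card
              ≤ (Finset.univ.filter fun p : Fin k => p.val ≠ 0).card :=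
                Finset.card_image_le
            _ ≤ (Finset.univ.erase (⟨0, h0k⟩ : Fin k)).card := Finset.card_le_card hsub
            _ = k - 1 := by
                rw [Finset.card_erase_of_mem (Finset.mem_univ _), Finset.card_univ,
                  Fintype.card_fin]
            _ < k := by omega
        · intro z hadj hzt
          rw [hyget] at hadj
          rcases adj_u.1 hadj with ⟨p, rfl⟩ | ⟨p, hp0, rfl⟩
          · exact absurd hzt (hBearly _ (by simp [hB]))
          · exact Finset.mem_image.2 ⟨p,
              Finset.mem_filter.2 ⟨Finset.mem_univ _, hp0⟩, rfl⟩
      · -- y = u'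
        refine greedy_cover_contra hnd hi (by rw [hyget]; exact huu'.trans hcu)
          {GkVert.M (⟨0, h0k⟩ : Fin k)} ?_ ?_
        · rw [Finset.card_singleton]; omega
        · intro z hadj hzt
          rw [hyget] at hadj
          rcases adj_u'.1 hadj with ⟨p, rfl⟩ | ⟨p, hp0, rfl⟩
          · exact absurd hzt (hBearly _ (by simp [hB]))
          · have hp : p = (⟨0, h0k⟩ : Fin k) := Fin.ext hp0
            rw [hp]
            exact Finset.mem_singleton_self _
      · -- y = U j : contradiction with connectivity
        have hlen : i + 1 < (x :: l).length := by
          simp only [List.length_cons]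
          omega
        obtain ⟨j', hj', hadj⟩ := hconn ⟨i + 1, hlen⟩ (by simp)
        have hget1 : (x :: l).get ⟨i + 1, hlen⟩ = l.get ⟨i, hi⟩ := rfl
        have hzx : ((x :: l).get j') = x ∨ ((x :: l).get j') ∈ l.take i := by
          rcases j' with ⟨jn, hjn⟩
          simp only [Fin.val_mk] at hj'
          cases jn with
          | zero => exact Or.inl rfl
          | succ m =>
              have hm : m < l.length := by
                simp only [List.length_cons] at hjn
                omega
              have hgm : (x :: l).get ⟨m + 1, hjn⟩ = l.get ⟨m, hm⟩ := rfl
              rw [hgm]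
              exact Or.inr (get_mem_take (by omega) hm)
        rw [hget1, hyget, ← hj] at hadj
        rcases adj_U.1 hadj with ⟨p, _, hzp⟩ | hzp | hzp
        · exact hBearly _ (by rw [hzp]; simp [hB]) hzx
        · exact hBearly _ (by rw [hzp]; simp [hB]) hzx
        · exact hBearly _ (by rw [hzp]; simp [hB]) hzx
    have wside : x ≠ GkVert.v → x ≠ GkVert.v' → (∀ p : Fin k, x ≠ GkVert.W p) → False := by
      intro hx1 hx2 hx3
      set B : Finset (GkVert k) :=
        insert GkVert.v (insert GkVert.v' (Finset.univ.image GkVert.W)) with hB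
      have hxB : x ∉ B := by
        simp only [hB, Finset.mem_insert, Finset.mem_image, Finset.mem_univ, true_and]
        push_neg
        exact ⟨hx1, hx2, fun p h => hx3 p h.symm⟩
      obtain ⟨y, hyB, hymin⟩ := B.exists_min_image (fun z => l.idxOf z)
        ⟨GkVert.v, by simp [hB]⟩
      have hyx : y ≠ x := fun h => hxB (h ▸ hyB)
      have hyl : y ∈ l := by
        rcases List.mem_cons.1 (hall y) with h | h
        · exact absurd h hyx
        · exact h
      set i := l.idxOf y with hidef
      have hi : i < l.length := List.idxOf_lt_length_iff.2 hyl
      have hyget : l.get ⟨i, hi⟩ = y := List.getElem_idxOf hi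
      have hBearly : ∀ z ∈ B, ¬(z = x ∨ z ∈ l.take i) := by
        rintro z hz (rfl | hzt)
        · exact hxB hz
        · have hlt := indexOf_lt_of_mem_take hzt
          have hle := hymin z hz
          omega
      have hyB' := hyB
      simp only [hB, Finset.mem_insert, Finset.mem_image, Finset.mem_univ, true_and] at hyB'
      rcases hyB' with rfl | rfl | ⟨j, hj⟩
      · -- y = v
        refine greedy_cover_contra hnd hi (by rw [hyget]; exact hvu.trans hcu)
          (Finset.image GkVert.M (Finset.univ.filter fun p : Fin k => p.val ≠ 0)) ?_ ?_
        · have hsub : (Finset.univ.filter fun p : Fin k => p.val ≠ 0) ⊆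
              Finset.univ.erase (⟨0, h0k⟩ : Fin k) := by
            intro p hp
            rw [Finset.mem_filter] at hp
            refine Finset.mem_erase.2 ⟨fun h => hp.2 (by rw [h]), Finset.mem_univ _⟩
          calc (Finset.image GkVert.M (Finset.univ.filter fun p : Fin k => p.val ≠ 0)).card
              ≤ (Finset.univ.filter fun p : Fin k => p.val ≠ 0).card :=
                Finset.card_image_le
            _ ≤ (Finset.univ.erase (⟨0, h0k⟩ : Fin k)).card := Finset.card_le_card hsub
            _ = k - 1 := by
                rw [Finset.card_erase_of_mem (Finset.mem_univ _), Finset.card_univ,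
                  Fintype.card_fin]
            _ < k := by omega
        · intro z hadj hzt
          rw [hyget] at hadj
          rcases adj_v.1 hadj with ⟨p, rfl⟩ | ⟨p, hp0, rfl⟩
          · exact absurd hzt (hBearly _ (by simp [hB]))
          · exact Finset.mem_image.2 ⟨p,
              Finset.mem_filter.2 ⟨Finset.mem_univ _, hp0⟩, rfl⟩
      · -- y = v'
        refine greedy_cover_contra hnd hi (by rw [hyget]; exact hvv'.trans (hvu.trans hcu))
          {GkVert.M (⟨0, h0k⟩ : Fin k)} ?_ ?_
        · rw [Finset.card_singleton]; omega
        · intro z hadj hzt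
          rw [hyget] at hadj
          rcases adj_v'.1 hadj with ⟨p, rfl⟩ | ⟨p, hp0, rfl⟩
          · exact absurd hzt (hBearly _ (by simp [hB]))
          · have hp : p = (⟨0, h0k⟩ : Fin k) := Fin.ext hp0
            rw [hp]
            exact Finset.mem_singleton_self _
      · -- y = W j : contradiction with connectivity
        have hlen : i + 1 < (x :: l).length := by
          simp only [List.length_cons]
          omega
        obtain ⟨j', hj', hadj⟩ := hconn ⟨i + 1, hlen⟩ (by simp)
        have hget1 : (x :: l).get ⟨i + 1, hlen⟩ = l.get ⟨i, hi⟩ := rfl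
        have hzx : ((x :: l).get j') = x ∨ ((x :: l).get j') ∈ l.take i := by
          rcases j' with ⟨jn, hjn⟩
          simp only [Fin.val_mk] at hj'
          cases jn with
          | zero => exact Or.inl rfl
          | succ m =>
              have hm : m < l.length := by
                simp only [List.length_cons] at hjn
                omega
              have hgm : (x :: l).get ⟨m + 1, hjn⟩ = l.get ⟨m, hm⟩ := rfl
              rw [hgm]
              exact Or.inr (get_mem_take (by omega) hm)
        rw [hget1, hyget, ← hj] at hadj
        rcases adj_W.1 hadj with ⟨p, _, hzp⟩ | hzp | hzp
        · exact hBearly _ (by rw [hzp]; simp [hB]) hzx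
        · exact hBearly _ (by rw [hzp]; simp [hB]) hzx
        · exact hBearly _ (by rw [hzp]; simp [hB]) hzx
    -- x cannot be on both sides
    cases x with
    | U p => exact wside (by simp) (by simp) (fun q => by simp)
    | W p => exact uside (by simp) (by simp) (fun q => by simp)
    | M p => exact uside (by simp) (by simp) (fun q => by simp)
    | u => exact wside (by simp) (by simp) (fun q => by simp)
    | u' => exact wside (by simp) (by simp) (fun q => by simp)
    | v => exact uside (by simp) (by simp) (fun q => by simp)
    | v' => exact uside (by simp) (by simp) (fun q => by simp)
  have hmem : f GkVert.u ∈ Finset.Icc 1 k := Finset.mem_Icc.2 ⟨h1u, by omega⟩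
  refine ⟨hmem, ?_, ?_, ?_⟩
  · rw [huu']; exact hmem
  · rw [hvu]; exact hmem
  · rw [hvv', hvu]; exact hmem
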